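/- Let G be a Rota-Baxter group with Rota-Baxter operator B (satisfying B(a)B(b) = B(aB(a)bB(a)^{-1}) for all a,b in G). Define B₁(a) = aB(a) and B₂(a) = B(a)^{-1}. Then (G, B₁, B₂) is a Rota-Baxter system of groups, i.e., B₁(a)B₁(b) = B₁(B₁(a)bB₂(a)) and B₂(b)B₂(a) = B₂(B₁(a)bB₂(a)) for all a,b in G. -/
import Mathlib

theorem stmt_0 {G : Type*} [Group G] (B : G → G)
    (hB : ∀ a b : G, B a * B b = B (a * B a * b * (B a)⁻¹))
    (B₁ B₂ : G → G) (hB₁ : ∀ a, B₁ a = a * B a) (hB₂ : ∀ a, B₂ a = (B a)⁻¹) :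
    (∀ a b : G, B₁ a * B₁ b = B₁ (B₁ a * b * B₂ a)) ∧
    (∀ a b : G, B₂ b * B₂ a = B₂ (B₁ a * b * B₂ a)) := by
  constructor <;> intro a b <;> simp only [hB₁, hB₂, ← hB] <;> group
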